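/- Let P be a poset, X ⊆ P, and B a connected non-empty subposet of P. Let Γ_B = {C ∈ Γ(P,X) | B ⊆ C}. If Γ_B is non-empty, then I_X(B) = {x ∈ X | B ⊆ st(x)} is non-empty and Γ_B has a minimum element, namely the connected component of st(I_X(B)) containing B. -/

import Mathlib

/-- The star of an element: all elements comparable to `a`. -/
def starOf {α : Type*} [PartialOrder α] (a : α) : Set α := {x | x ≤ a ∨ a ≤ x}

/-- The star of a subset: elements comparable to every element of `A`. -/
def starSetOf {α : Type*} [PartialOrder α] (A : Set α) : Set α := ⋂ a ∈ A, starOf a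

/-- A subset is astral if it is contained in the star of some element. -/
def IsAstral {α : Type*} [PartialOrder α] (A : Set α) : Prop := ∃ x : α, A ⊆ starOf x

/-- One step of the comparability relation inside a subposet `S`. -/
def CompStep {α : Type*} [PartialOrder α] (S : Set α) (x y : α) : Prop :=
  x ∈ S ∧ y ∈ S ∧ (x ≤ y ∨ y ≤ x)

/-- `x` and `y` are connected inside the subposet `S`. -/
def ConnIn {α : Type*} [PartialOrder α] (S : Set α) (x y : α) : Prop :=
  Relation.ReflTransGen (CompStep S) x y

/-- A subposet is connected (as a subposet, via comparability). -/
def IsConnSub {α : Type*} [PartialOrder α] (S : Set α) : Prop :=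
  S.Nonempty ∧ ∀ x ∈ S, ∀ y ∈ S, ConnIn S x y

/-- The connected component of `x` in the subposet `S`. -/
def compOf {α : Type*} [PartialOrder α] (S : Set α) (x : α) : Set α :=
  {y | y ∈ S ∧ ConnIn S x y}

/-- `C` is a connected component of the subposet `S`. -/
def IsCompOf {α : Type*} [PartialOrder α] (S C : Set α) : Prop :=
  ∃ x ∈ S, C = compOf S x

/-- The crosscut poset `Γ(P,X)`: connected components of the nonempty `st(A)`, `∅ ≠ A ⊆ X`. -/
def crosscutPoset {α : Type*} [PartialOrder α] (X : Set α) : Set (Set α) :=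
  {C | ∃ A : Set α, A.Nonempty ∧ A ⊆ X ∧ IsCompOf (starSetOf A) C}

/-- The subposet `Γ_f(P,X)` coming from finite subsets `A ⊆ X`. -/
def crosscutPosetF {α : Type*} [PartialOrder α] (X : Set α) : Set (Set α) :=
  {C | ∃ A : Set α, A.Nonempty ∧ A.Finite ∧ A ⊆ X ∧ IsCompOf (starSetOf A) C}

/-- `X` is a cutset: every finite chain extends to a chain by an element of `X`. -/
def IsCutset {α : Type*} [PartialOrder α] (X : Set α) : Prop :=
  ∀ σ : Set α, σ.Finite → IsChain (· ≤ ·) σ → ∃ a ∈ X, IsChain (· ≤ ·) (insert a σ)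

/-- A subset `X` is coherent: every finite nonempty bounded subset of `X` has a meet or a join. -/
def IsCoherent {α : Type*} [PartialOrder α] (X : Set α) : Prop :=
  ∀ A ⊆ X, A.Finite → A.Nonempty → (BddAbove A ∨ BddBelow A) →
    (∃ z, IsGLB A z) ∨ (∃ z, IsLUB A z)

/-- The simplices of the crosscut complex `Γ_C(P,X)`: nonempty finite astral subsets of `X`. -/
def IsCCSimplex {α : Type*} [PartialOrder α] (X σ : Set α) : Prop :=
  σ ⊆ X ∧ σ.Finite ∧ σ.Nonempty ∧ IsAstral σ

/-- `I_X(D) = {x ∈ X | D ⊆ st(x)}`. -/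
def astralIdx {α : Type*} [PartialOrder α] (X D : Set α) : Set α :=
  {x ∈ X | D ⊆ starOf x}

/-- The set of maximal elements of a poset. -/
def mxlSet (α : Type*) [PartialOrder α] : Set α := {a | ∀ b, a ≤ b → b = a}

/-- The set of minimal elements of a poset. -/
def mnlSet (α : Type*) [PartialOrder α] : Set α := {a | ∀ b, b ≤ a → b = a}

/-- Type synonym carrying the Alexandroff topology (down-sets are open) of a preorder. -/
def AlexSp (β : Type*) := β

instance {β : Type*} [Preorder β] : Preorder (AlexSp β) := inferInstanceAs (Preorder β)
instance {β : Type*} [PartialOrder β] : PartialOrder (AlexSp β) :=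
  inferInstanceAs (PartialOrder β)

instance {β : Type*} [Preorder β] : TopologicalSpace (AlexSp β) where
  IsOpen U := IsLowerSet U
  isOpen_univ := isLowerSet_univ
  isOpen_inter _ _ h₁ h₂ := h₁.inter h₂
  isOpen_sUnion _ h := isLowerSet_sUnion h

lemma connIn_mono {α : Type*} [PartialOrder α] {S T : Set α} (hST : S ⊆ T) {x y : α}
    (h : ConnIn S x y) : ConnIn T x y :=
  Relation.ReflTransGen.mono (fun _ _ ⟨h1, h2, h3⟩ => ⟨hST h1, hST h2, h3⟩) x y h

lemma compOf_subset {α : Type*} [PartialOrder α] (S : Set α) (x : α) : compOf S x ⊆ S :=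
  fun _ hy => hy.1

lemma subset_starSetOf_iff {α : Type*} [PartialOrder α] {A D : Set α} :
    D ⊆ starSetOf A ↔ ∀ a ∈ A, D ⊆ starOf a := by
  constructor
  · intro h a ha d hd
    have := h hd
    simp only [starSetOf, Set.mem_iInter] at this
    exact this a ha
  · intro h d hd
    simp only [starSetOf, Set.mem_iInter]
    exact fun a ha => h a ha hd

/-- If a connected nonempty subposet `B` is contained in some element of `Γ(P,X)`, then
`I_X(B) ≠ ∅` and `Γ_B = {C ∈ Γ(P,X) | B ⊆ C}` has a minimum element, namely the connected
component of `st(I_X(B))` containing `B`. -/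
theorem stmt_4 {α : Type*} [PartialOrder α] {X B : Set α}
    (hB : IsConnSub B) (hΓB : ∃ C ∈ crosscutPoset X, B ⊆ C) :
    (astralIdx X B).Nonempty ∧
      ∃ C₀, IsCompOf (starSetOf (astralIdx X B)) C₀ ∧ B ⊆ C₀ ∧
        C₀ ∈ crosscutPoset X ∧ ∀ C ∈ crosscutPoset X, B ⊆ C → C₀ ⊆ C := by
  obtain ⟨C, ⟨A, hAne, hAX, x₀, hx₀, hC⟩, hBC⟩ := hΓB
  -- B ⊆ st(A)
  have hBstA : B ⊆ starSetOf A := fun b hb => (compOf_subset _ _ (hC ▸ hBC hb))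
  have hAI : A ⊆ astralIdx X B := by
    intro a ha
    exact ⟨hAX ha, (subset_starSetOf_iff.mp hBstA) a ha⟩
  set I := astralIdx X B with hI
  have hIne : I.Nonempty := hAne.mono hAI
  obtain ⟨⟨b₀, hb₀⟩, hBconn⟩ := hB
  have hBstI : B ⊆ starSetOf I := subset_starSetOf_iff.mpr (fun a ha => ha.2)
  refine ⟨hIne, compOf (starSetOf I) b₀, ⟨b₀, hBstI hb₀, rfl⟩, ?_, ?_, ?_⟩
  · intro b hb
    exact ⟨hBstI hb, connIn_mono hBstI (hBconn b₀ hb₀ b hb)⟩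
  · exact ⟨I, hIne, fun a ha => ha.1, b₀, hBstI hb₀, rfl⟩
  · rintro C' ⟨A', hA'ne, hA'X, y₀, hy₀, rfl⟩ hBC' y ⟨hyI, hconn⟩
    have hB'stA : B ⊆ starSetOf A' := fun b hb => (compOf_subset _ _ (hBC' hb))
    have hA'I : A' ⊆ I := fun a ha => ⟨hA'X ha, (subset_starSetOf_iff.mp hB'stA) a ha⟩
    have hsub : starSetOf I ⊆ starSetOf A' := by
      intro z hz
      simp only [starSetOf, Set.mem_iInter] at hz ⊢
      exact fun a ha => hz a (hA'I ha)
    have h1 : ConnIn (starSetOf A') y₀ b₀ := (hBC' hb₀).2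
    have h2 : ConnIn (starSetOf A') b₀ y := connIn_mono hsub hconn
    exact ⟨hsub hyI, h1.trans h2⟩
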